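/- arXiv:1707.06450 — 2 statements merged into one kernel-verified Lean document; each statement's English description precedes it below -/
import Mathlib

section
/- Let K be a field of characteristic zero and let σ be an automorphism of K[x₁,...,xₙ,p₁,...,pₙ] preserving the standard Poisson bracket, of the form σ(xᵢ) = xᵢ + fᵢ + (terms of height > k) and σ(pᵢ) = pᵢ + gᵢ + (terms of height > k), where fᵢ, gᵢ are homogeneous of degree k ≥ 2. Then ∂fᵢ/∂pⱼ = ∂fⱼ/∂pᵢ and ∂gᵢ/∂xⱼ = ∂gⱼ/∂xᵢ for all i, j. -/
open MvPolynomial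

/-- The standard Poisson bracket on `K[x₁,…,xₙ,p₁,…,pₙ]` (variables indexed by
`Fin n ⊕ Fin n`, `inl i ↔ xᵢ`, `inr i ↔ pᵢ`): it satisfies `{xᵢ,xⱼ} = {pᵢ,pⱼ} = 0`
and `{pᵢ,xⱼ} = δᵢⱼ`, extended as a biderivation. -/
noncomputable def poissonBracket {K : Type*} [CommRing K] {n : ℕ}
    (f g : MvPolynomial (Fin n ⊕ Fin n) K) : MvPolynomial (Fin n ⊕ Fin n) K :=
  ∑ i : Fin n,
    (pderiv (Sum.inr i) f * pderiv (Sum.inl i) g -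
      pderiv (Sum.inl i) f * pderiv (Sum.inr i) g)

section
open Finsupp
noncomputable section PBAux

variable {R : Type*} [CommRing R] {τ : Type*}

lemma pbaux_degree_sub_single (s : τ →₀ ℕ) (v : τ) (h : s v ≠ 0) :
    (s - Finsupp.single v 1).degree + 1 = s.degree := by
  have hle : Finsupp.single v 1 ≤ s :=
    Finsupp.single_le_iff.mpr (Nat.one_le_iff_ne_zero.mpr h)
  have hadd : s - Finsupp.single v 1 + Finsupp.single v 1 = s := tsub_add_cancel_of_le hle
  have hdeg : ∀ a b : τ →₀ ℕ, (a + b).degree = a.degree + b.degree := by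
    intro a b
    simp only [Finsupp.degree_eq_weight_one, map_add]
  have hsingle : (Finsupp.single v 1).degree = 1 := by
    simp [Finsupp.degree_single]
  conv_rhs => rw [← hadd]
  rw [hdeg, hsingle]

lemma pbaux_hc_pderiv (m : ℕ) (v : τ) (q : MvPolynomial τ R) :
    homogeneousComponent m (pderiv v q) = pderiv v (homogeneousComponent (m + 1) q) := by
  induction q using MvPolynomial.induction_on' with
  | add p q hp hq => simp [map_add, hp, hq]
  | monomial s c =>
    have h1 : homogeneousComponent (m + 1) (monomial s c) =
        if m + 1 = s.degree then monomial s c else 0 :=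
      homogeneousComponent_of_mem
        ((mem_homogeneousSubmodule _ _).mpr (isHomogeneous_monomial c rfl))
    rw [pderiv_monomial, h1]
    by_cases hsv : s v = 0
    · simp [hsv, apply_ite (⇑(pderiv v))]
    · have h2 : homogeneousComponent m (monomial (s - Finsupp.single v 1) (c * (s v : R))) =
          if m = (s - Finsupp.single v 1).degree then
            monomial (s - Finsupp.single v 1) (c * (s v : R)) else 0 :=
        homogeneousComponent_of_mem
          ((mem_homogeneousSubmodule _ _).mpr (isHomogeneous_monomial _ rfl))
      rw [h2, apply_ite (⇑(pderiv v)), map_zero, pderiv_monomial]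
      have hdd := pbaux_degree_sub_single s v hsv
      exact if_congr (by omega) rfl rfl

lemma pbaux_hc_mul_homog {P : MvPolynomial τ R} {e : ℕ} (hP : P.IsHomogeneous e)
    (m : ℕ) (Q : MvPolynomial τ R) :
    homogeneousComponent m (P * Q) =
      if e ≤ m then P * homogeneousComponent (m - e) Q else 0 := by
  conv_lhs => rw [← sum_homogeneousComponent Q]
  rw [Finset.mul_sum, map_sum]
  have hterm : ∀ t : ℕ, homogeneousComponent m (P * homogeneousComponent t Q) =
      if t = m - e ∧ e ≤ m then P * homogeneousComponent t Q else 0 := by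
    intro t
    rw [homogeneousComponent_of_mem ((mem_homogeneousSubmodule _ _).mpr
      (hP.mul (homogeneousComponent_isHomogeneous t Q)))]
    split_ifs with hc1 hc2 <;> first | rfl | omega
  simp_rw [hterm]
  by_cases he : e ≤ m
  · simp only [he, and_true]
    rw [Finset.sum_ite_eq' (Finset.range _) (m - e)
      (fun t => P * homogeneousComponent t Q)]
    split_ifs with h
    · rfl
    · rw [homogeneousComponent_eq_zero _ _ (by simp only [Finset.mem_range] at h; omega),
        mul_zero]
  · simp [he]

lemma pbaux_hc_mul_lowzero {P : MvPolynomial τ R} {m : ℕ}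
    (h : ∀ d ≤ m, homogeneousComponent d P = 0) (Q : MvPolynomial τ R) :
    homogeneousComponent m (P * Q) = 0 := by
  conv_lhs => rw [← sum_homogeneousComponent P]
  rw [Finset.sum_mul, map_sum]
  apply Finset.sum_eq_zero
  intro t _
  rw [pbaux_hc_mul_homog (homogeneousComponent_isHomogeneous t P) m Q]
  split_ifs with hle
  · rw [h t hle, zero_mul]
  · rfl

lemma pbaux_pderiv_isHomog {P : MvPolynomial τ R} {m : ℕ}
    (hP : P.IsHomogeneous (m + 1)) (v : τ) : (pderiv v P).IsHomogeneous m := by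
  have h := pbaux_hc_pderiv m v P
  rw [homogeneousComponent_of_mem ((mem_homogeneousSubmodule _ _).mpr hP),
    if_pos rfl] at h
  rw [← h]
  exact homogeneousComponent_isHomogeneous m _

end PBAux

section PB

variable {K : Type*} [CommRing K] {n : ℕ}

lemma pb_add_left (a a' b : MvPolynomial (Fin n ⊕ Fin n) K) :
    poissonBracket (a + a') b = poissonBracket a b + poissonBracket a' b := by
  unfold poissonBracket
  rw [← Finset.sum_add_distrib]
  exact Finset.sum_congr rfl fun l _ => by rw [map_add, map_add]; ring

lemma pb_add_right (a b b' : MvPolynomial (Fin n ⊕ Fin n) K) :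
    poissonBracket a (b + b') = poissonBracket a b + poissonBracket a b' := by
  unfold poissonBracket
  rw [← Finset.sum_add_distrib]
  exact Finset.sum_congr rfl fun l _ => by rw [map_add, map_add]; ring

lemma pb_antisymm (a b : MvPolynomial (Fin n ⊕ Fin n) K) :
    poissonBracket a b = -poissonBracket b a := by
  unfold poissonBracket
  rw [← Finset.sum_neg_distrib]
  exact Finset.sum_congr rfl fun l _ => by ring

lemma pb_isHomog {F G : MvPolynomial (Fin n ⊕ Fin n) K} {e m : ℕ}
    (hF : F.IsHomogeneous (e + 1)) (hG : G.IsHomogeneous (m + 1)) :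
    (poissonBracket F G).IsHomogeneous (e + m) := by
  unfold poissonBracket
  apply MvPolynomial.IsHomogeneous.sum
  intro l _
  exact ((pbaux_pderiv_isHomog hF _).mul (pbaux_pderiv_isHomog hG _)).sub
    ((pbaux_pderiv_isHomog hF _).mul (pbaux_pderiv_isHomog hG _))

lemma pb_comp_right_zero {S : MvPolynomial (Fin n ⊕ Fin n) K} {m : ℕ}
    (hS : ∀ d ≤ m + 2, homogeneousComponent d S = 0) (P : MvPolynomial (Fin n ⊕ Fin n) K) :
    homogeneousComponent (m + 1) (poissonBracket P S) = 0 := by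
  unfold poissonBracket
  rw [map_sum]
  apply Finset.sum_eq_zero
  intro l _
  have hzero : ∀ (w : Fin n ⊕ Fin n) (P' : MvPolynomial (Fin n ⊕ Fin n) K),
      homogeneousComponent (m + 1) (P' * pderiv w S) = 0 := by
    intro w P'
    rw [mul_comm]
    apply pbaux_hc_mul_lowzero
    intro d hd
    rw [pbaux_hc_pderiv, hS (d + 1) (by omega), map_zero]
  rw [map_sub, hzero _ _, hzero _ _, sub_zero]

lemma pb_comp_left_zero {S : MvPolynomial (Fin n ⊕ Fin n) K} {m : ℕ}
    (hS : ∀ d ≤ m + 2, homogeneousComponent d S = 0) (P : MvPolynomial (Fin n ⊕ Fin n) K) :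
    homogeneousComponent (m + 1) (poissonBracket S P) = 0 := by
  rw [pb_antisymm, map_neg, pb_comp_right_zero hS P, neg_zero]

lemma pb_X_inl (i : Fin n) (G : MvPolynomial (Fin n ⊕ Fin n) K) :
    poissonBracket (X (Sum.inl i)) G = -(pderiv (Sum.inr i) G) := by
  unfold poissonBracket
  rw [Finset.sum_eq_single i]
  · rw [pderiv_X_of_ne (by simp), pderiv_X_self]; ring
  · intro l _ hl
    rw [pderiv_X_of_ne (by simp), pderiv_X_of_ne (by simpa using (Ne.symm hl))]; ring
  · intro h; exact absurd (Finset.mem_univ i) h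

lemma pb_X_inr (i : Fin n) (G : MvPolynomial (Fin n ⊕ Fin n) K) :
    poissonBracket (X (Sum.inr i)) G = pderiv (Sum.inl i) G := by
  unfold poissonBracket
  rw [Finset.sum_eq_single i]
  · rw [pderiv_X_self, pderiv_X_of_ne (by simp)]; ring
  · intro l _ hl
    rw [pderiv_X_of_ne (by simpa using (Ne.symm hl)), pderiv_X_of_ne (by simp)]; ring
  · intro h; exact absurd (Finset.mem_univ i) h

lemma pb_master {m : ℕ} (α β : Fin n ⊕ Fin n)
    (F G A B : MvPolynomial (Fin n ⊕ Fin n) K)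
    (hF : F.IsHomogeneous (m + 2)) (hG : G.IsHomogeneous (m + 2))
    (hA : ∀ d ≤ m + 2, homogeneousComponent d (A - X α - F) = 0)
    (hB : ∀ d ≤ m + 2, homogeneousComponent d (B - X β - G) = 0) :
    homogeneousComponent (m + 1) (poissonBracket A B) =
      poissonBracket (X α) G + poissonBracket F (X β) := by
  have hXα : (X α : MvPolynomial (Fin n ⊕ Fin n) K).IsHomogeneous (0 + 1) := by
    simpa using isHomogeneous_X K α
  have hXβ : (X β : MvPolynomial (Fin n ⊕ Fin n) K).IsHomogeneous (0 + 1) := by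
    simpa using isHomogeneous_X K β
  have hF' : F.IsHomogeneous (m + 1 + 1) := hF
  have hG' : G.IsHomogeneous (m + 1 + 1) := hG
  have c1 : homogeneousComponent (m + 1)
      (poissonBracket (X α : MvPolynomial (Fin n ⊕ Fin n) K) (X β)) = 0 := by
    rw [homogeneousComponent_of_mem ((mem_homogeneousSubmodule _ _).mpr (pb_isHomog hXα hXβ)),
      if_neg (by omega)]
  have c2 : homogeneousComponent (m + 1)
      (poissonBracket (X α : MvPolynomial (Fin n ⊕ Fin n) K) G) = poissonBracket (X α) G := by
    rw [homogeneousComponent_of_mem ((mem_homogeneousSubmodule _ _).mpr (pb_isHomog hXα hG')),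
      if_pos (by omega)]
  have c4 : homogeneousComponent (m + 1)
      (poissonBracket F (X β : MvPolynomial (Fin n ⊕ Fin n) K)) = poissonBracket F (X β) := by
    rw [homogeneousComponent_of_mem ((mem_homogeneousSubmodule _ _).mpr (pb_isHomog hF' hXβ)),
      if_pos (by omega)]
  have c5 : homogeneousComponent (m + 1) (poissonBracket F G) = 0 := by
    rw [homogeneousComponent_of_mem ((mem_homogeneousSubmodule _ _).mpr (pb_isHomog hF' hG')),
      if_neg (by omega)]
  have hA2 : A = X α + F + (A - X α - F) := by ring
  have hB2 : B = X β + G + (B - X β - G) := by ring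
  conv_lhs => rw [hA2, hB2]
  rw [pb_add_left, pb_add_left, pb_add_right, pb_add_right, pb_add_right, pb_add_right,
    pb_add_right, pb_add_right, map_add, map_add, map_add, map_add, map_add, map_add,
    map_add, map_add]
  rw [c1, c2, c4, c5, pb_comp_right_zero hB, pb_comp_right_zero hB, pb_comp_right_zero hB,
    pb_comp_left_zero hA, pb_comp_left_zero hA]
  ring

end PB

end

/-- if `σ` is a Poisson automorphism with
`σ(xᵢ) = xᵢ + fᵢ + (height > k)`, `σ(pᵢ) = pᵢ + gᵢ + (height > k)`, `fᵢ, gᵢ` homogeneous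
of degree `k ≥ 2`, then `∂fᵢ/∂pⱼ = ∂fⱼ/∂pᵢ` and `∂gᵢ/∂xⱼ = ∂gⱼ/∂xᵢ`. -/
theorem degree_k_component_closed (K : Type*) [Field K] [CharZero K] (n k : ℕ) (hk : 2 ≤ k)
    (σ : MvPolynomial (Fin n ⊕ Fin n) K ≃ₐ[K] MvPolynomial (Fin n ⊕ Fin n) K)
    (hpois : ∀ u v, poissonBracket (σ u) (σ v) = σ (poissonBracket u v))
    (f g : Fin n → MvPolynomial (Fin n ⊕ Fin n) K)
    (hf : ∀ i, (f i).IsHomogeneous k) (hg : ∀ i, (g i).IsHomogeneous k)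
    (hx : ∀ i, ∀ d ≤ k,
      homogeneousComponent d (σ (X (Sum.inl i)) - X (Sum.inl i) - f i) = 0)
    (hp : ∀ i, ∀ d ≤ k,
      homogeneousComponent d (σ (X (Sum.inr i)) - X (Sum.inr i) - g i) = 0) :
    (∀ i j, pderiv (Sum.inr j) (f i) = pderiv (Sum.inr i) (f j)) ∧
      (∀ i j, pderiv (Sum.inl j) (g i) = pderiv (Sum.inl i) (g j)) := by
  obtain ⟨m, rfl⟩ : ∃ m, k = m + 2 := ⟨k - 2, by omega⟩
  constructor
  · intro i j
    have hzero : poissonBracket (X (Sum.inl i) : MvPolynomial (Fin n ⊕ Fin n) K)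
        (X (Sum.inl j)) = 0 := by
      rw [pb_X_inl, pderiv_X_of_ne (by simp), neg_zero]
    have key := pb_master (Sum.inl i) (Sum.inl j) (f i) (f j)
      (σ (X (Sum.inl i))) (σ (X (Sum.inl j))) (hf i) (hf j) (hx i) (hx j)
    rw [hpois, hzero, map_zero, map_zero] at key
    rw [pb_X_inl, pb_antisymm (f i), pb_X_inl] at key
    linear_combination -key
  · intro i j
    have hzero : poissonBracket (X (Sum.inr i) : MvPolynomial (Fin n ⊕ Fin n) K)
        (X (Sum.inr j)) = 0 := by
      rw [pb_X_inr, pderiv_X_of_ne (by simp)]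
    have key := pb_master (Sum.inr i) (Sum.inr j) (g i) (g j)
      (σ (X (Sum.inr i))) (σ (X (Sum.inr j))) (hg i) (hg j) (hp i) (hp j)
    rw [hpois, hzero, map_zero, map_zero] at key
    rw [pb_X_inr, pb_antisymm (g i), pb_X_inr] at key
    linear_combination key
end

section
/- Let K be a field and let (σ_k) be a sequence of automorphisms of K[x₁,...,xₙ] such that for every k, Ht((σ_k⁻¹ ∘ σ_{k+1})(xᵢ) − xᵢ) ≥ k+1 for all i. Then for each i the sequence of polynomials σ_k(xᵢ) converges in the formal power series topology: the homogeneous component of degree d of σ_k(xᵢ) is eventually constant in k, for every d. -/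
open MvPolynomial

section Aux

variable {K : Type*} [Field K] {n : ℕ}

/-- `cond k f` : all monomials of `f` have total degree `> k`. -/
def HtGt (k : ℕ) (f : MvPolynomial (Fin n) K) : Prop :=
  ∀ m : Fin n →₀ ℕ, (m.sum fun _ e => e) ≤ k → coeff m f = 0

lemma htGt_iff (k : ℕ) (f : MvPolynomial (Fin n) K) :
    (∀ d ≤ k, homogeneousComponent d f = 0) ↔ HtGt k f := by
  constructor
  · intro H m hm
    have := H (m.sum fun _ e => e) hm
    have h2 := congrArg (coeff m) this
    rw [coeff_homogeneousComponent] at h2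
    simp [Finsupp.degree, Finsupp.sum] at h2
    exact h2 rfl
  · intro H d hd
    ext m
    rw [coeff_homogeneousComponent]
    split_ifs with hm
    · exact H m (le_of_eq_of_le hm hd)
    · simp

lemma HtGt.add {k : ℕ} {f g : MvPolynomial (Fin n) K} (hf : HtGt k f) (hg : HtGt k g) :
    HtGt k (f + g) := by
  intro m hm
  simp [coeff_add, hf m hm, hg m hm]

lemma HtGt.mul_left {k : ℕ} {f : MvPolynomial (Fin n) K} (hf : HtGt k f)
    (g : MvPolynomial (Fin n) K) : HtGt k (g * f) := by
  intro m hm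
  rw [coeff_mul]
  apply Finset.sum_eq_zero
  intro p hp
  rw [Finset.HasAntidiagonal.mem_antidiagonal] at hp
  have hle : (p.2.sum fun _ e => e) ≤ (m.sum fun _ e => e) := by
    rw [← hp, Finsupp.sum_add_index' (fun _ => rfl) (fun _ _ _ => rfl)]
    exact Nat.le_add_left _ _
  rw [hf p.2 (hle.trans hm), mul_zero]

lemma HtGt.algHom {k : ℕ} (ψ : MvPolynomial (Fin n) K →ₐ[K] MvPolynomial (Fin n) K)
    (hψ : ∀ j : Fin n, HtGt k (ψ (X j) - X j)) (p : MvPolynomial (Fin n) K) :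
    HtGt k (ψ p - p) := by
  induction p using MvPolynomial.induction_on with
  | C a =>
      rw [show ψ (C a) = C a by rw [← algebraMap_eq]; exact ψ.commutes a, sub_self]
      intro m _; simp
  | add p q hp hq =>
      have : ψ (p + q) - (p + q) = (ψ p - p) + (ψ q - q) := by rw [map_add]; ring
      rw [this]; exact hp.add hq
  | mul_X p j hp =>
      have : ψ (p * X j) - p * X j = X j * (ψ p - p) + ψ p * (ψ (X j) - X j) := by
        rw [map_mul]; ring
      rw [this]
      exact (hp.mul_left _).add ((hψ j).mul_left _)

end Aux

/-- if `(σ_k)` is a sequence of automorphisms of `K[x₁,…,xₙ]` with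
`Ht((σ_k⁻¹ ∘ σ_{k+1})(xᵢ) − xᵢ) ≥ k+1` for all `i` (composition convention:
`(φ∘ψ)(xᵢ)` is obtained by substituting `ψ(xⱼ)` for `xⱼ` in `φ(xᵢ)`, i.e. it is
`ψ(φ(xᵢ))` as algebra maps), then each sequence of polynomials `σ_k(xᵢ)` converges in
the formal power series topology: every fixed-degree homogeneous component is
eventually constant in `k`. -/
theorem tame_sequence_converges (K : Type*) [Field K] (n : ℕ)
    (σ : ℕ → (MvPolynomial (Fin n) K ≃ₐ[K] MvPolynomial (Fin n) K))
    (h : ∀ k : ℕ, ∀ i : Fin n, ∀ d ≤ k,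
      homogeneousComponent d ((σ (k + 1)) ((σ k).symm (X i)) - X i) = 0) :
    ∀ (i : Fin n) (d : ℕ), ∃ N : ℕ, ∀ k ≥ N,
      homogeneousComponent d ((σ k) (X i)) = homogeneousComponent d ((σ N) (X i)) := by
  intro i d
  refine ⟨d, ?_⟩
  have key : ∀ k, d ≤ k →
      homogeneousComponent d ((σ (k + 1)) (X i)) = homogeneousComponent d ((σ k) (X i)) := by
    intro k hk
    set τ : MvPolynomial (Fin n) K →ₐ[K] MvPolynomial (Fin n) K :=
      ((σ (k + 1)).toAlgHom).comp ((σ k).symm.toAlgHom)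
    have hτ : ∀ j : Fin n, HtGt k (τ (X j) - X j) := fun j =>
      (htGt_iff k _).mp (fun e he => h k j e he)
    have hm := HtGt.algHom τ hτ ((σ k) (X i))
    have hτa : τ ((σ k) (X i)) = (σ (k + 1)) (X i) := by
      simp [τ, AlgHom.comp_apply]
    rw [hτa] at hm
    have := ((htGt_iff k _).mpr hm) d hk
    rw [map_sub, sub_eq_zero] at this
    exact this
  intro k hk
  induction k with
  | zero => simp_all
  | succ k ih =>
      rcases Nat.lt_or_ge d (k + 1) with hlt | hge
      · rw [key k (Nat.lt_succ_iff.mp hlt), ih (Nat.lt_succ_iff.mp hlt)]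
      · have hd : d = k + 1 := le_antisymm hk hge
        subst hd
        rfl
end
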